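/- If L is a positive semidefinite linear functional on a unital commutative ℝ-algebra A with L(1)=1, and a ∈ A, then v_L(a) < ∞ if and only if there exists c ∈ [0,∞) such that |L(aⁿ)| ≤ cⁿ for all n ∈ ℕ₀. Moreover, in that case v_L(a) = inf{c ∈ [0,∞) : |L(aⁿ)| ≤ cⁿ for all n ∈ ℕ₀}. -/

import Mathlib

open MeasureTheory

variable {A : Type*} [CommRing A] [Algebra ℝ A]

/-- The set of ratios `L(a^{2n+2})/L(a^{2n})` over `n` with `L(a^{2n}) ≠ 0`. -/
def ratioSet (L : A →ₗ[ℝ] ℝ) (a : A) : Set ℝ :=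
  {r | ∃ n : ℕ, L (a ^ (2 * n)) ≠ 0 ∧ r = L (a ^ (2 * n + 2)) / L (a ^ (2 * n))}

/-- `v_L(a) = sqrt( sup_{n, L(a^{2n}) ≠ 0} L(a^{2n+2})/L(a^{2n}) )`. -/
noncomputable def vL (L : A →ₗ[ℝ] ℝ) (a : A) : ℝ :=
  Real.sqrt (sSup (ratioSet L a))

lemma myCS (L : A →ₗ[ℝ] ℝ) (hpsd : ∀ x : A, 0 ≤ L (x ^ 2)) (x y : A) :
    (L (x * y))^2 ≤ L (x^2) * L (y^2) := by
  have key : ∀ t : ℝ, 0 ≤ L (y^2) * (t * t) + 2 * L (x*y) * t + L (x^2) := by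
    intro t
    have h := hpsd (x + t • y)
    have hexp : (x + t • y)^2 = x^2 + (2*t) • (x*y) + (t^2) • (y^2) := by
      rw [add_sq, smul_pow, mul_smul_comm, two_mul, add_mul, smul_add, two_mul, add_smul]
    rw [hexp, map_add, map_add, _root_.map_smul, _root_.map_smul, smul_eq_mul, smul_eq_mul] at h
    nlinarith [h]
  have hd := discrim_le_zero key
  rw [discrim] at hd
  nlinarith

lemma evenNonneg (L : A →ₗ[ℝ] ℝ) (hpsd : ∀ x : A, 0 ≤ L (x ^ 2)) (a : A) (n : ℕ) :
    0 ≤ L (a ^ (2 * n)) := by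
  rw [mul_comm, pow_mul]; exact hpsd _

lemma csEven (L : A →ₗ[ℝ] ℝ) (hpsd : ∀ x : A, 0 ≤ L (x ^ 2)) (a : A) (n : ℕ) :
    (L (a ^ (2 * (n + 1))))^2 ≤ L (a ^ (2 * n)) * L (a ^ (2 * (n + 2))) := by
  have h := myCS L hpsd (a ^ n) (a ^ (n + 2))
  rw [← pow_add, ← pow_mul, ← pow_mul] at h
  convert h using 4 <;> ring

lemma csOdd (L : A →ₗ[ℝ] ℝ) (hpsd : ∀ x : A, 0 ≤ L (x ^ 2)) (a : A) (k : ℕ) :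
    (L (a ^ (2 * k + 1)))^2 ≤ L (a ^ (2 * k)) * L (a ^ (2 * (k + 1))) := by
  have h := myCS L hpsd (a ^ k) (a ^ (k + 1))
  rw [← pow_add, ← pow_mul, ← pow_mul] at h
  convert h using 4 <;> ring

/-- ratio upper bound implies even-moment bound `s_n ≤ M^n`. -/
lemma evenMomentBound (L : A →ₗ[ℝ] ℝ) (hpsd : ∀ x : A, 0 ≤ L (x ^ 2)) (h1 : L 1 = 1)
    (a : A) {M : ℝ} (hM : 0 ≤ M) (hub : ∀ r ∈ ratioSet L a, r ≤ M) (n : ℕ) :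
    L (a ^ (2 * n)) ≤ M ^ n := by
  induction n with
  | zero => simp [h1]
  | succ n ih =>
    by_cases hz : L (a ^ (2 * n)) = 0
    · have h := csEven L hpsd a n
      rw [hz, zero_mul] at h
      have hz2 : L (a ^ (2 * (n + 1))) = 0 := by nlinarith [sq_nonneg (L (a ^ (2 * (n + 1))))]
      rw [hz2]; positivity
    · have hpos : 0 < L (a ^ (2 * n)) := (evenNonneg L hpsd a n).lt_of_ne (Ne.symm hz)
      have hr : L (a ^ (2 * n + 2)) / L (a ^ (2 * n)) ≤ M := hub _ ⟨n, hz, rfl⟩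
      rw [div_le_iff₀ hpos] at hr
      calc L (a ^ (2 * (n + 1))) = L (a ^ (2 * n + 2)) := by ring_nf
        _ ≤ M * L (a ^ (2 * n)) := hr
        _ ≤ M * M ^ n := by exact mul_le_mul_of_nonneg_left ih hM
        _ = M ^ (n + 1) := by ring

/-- ratio upper bound implies moment bound with `c = √M`. -/
lemma absMomentBound (L : A →ₗ[ℝ] ℝ) (hpsd : ∀ x : A, 0 ≤ L (x ^ 2)) (h1 : L 1 = 1)
    (a : A) {M : ℝ} (hM : 0 ≤ M) (hub : ∀ r ∈ ratioSet L a, r ≤ M) (m : ℕ) :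
    |L (a ^ m)| ≤ Real.sqrt M ^ m := by
  have hsq : Real.sqrt M ^ 2 = M := Real.sq_sqrt hM
  have hs := Real.sqrt_nonneg M
  rcases Nat.even_or_odd m with ⟨k, hk⟩ | ⟨k, hk⟩
  · subst hk
    have h2 : 2 * k = k + k := by ring
    rw [abs_of_nonneg (by rw [← h2]; exact evenNonneg L hpsd a k)]
    calc L (a ^ (k + k)) ≤ M ^ k := by rw [← h2]; exact evenMomentBound L hpsd h1 a hM hub k
      _ = (Real.sqrt M ^ 2) ^ k := by rw [hsq]
      _ = Real.sqrt M ^ (k + k) := by rw [← pow_mul]; ring_nf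
  · subst hk
    have h := csOdd L hpsd a k
    have b1 := evenMomentBound L hpsd h1 a hM hub k
    have b2 := evenMomentBound L hpsd h1 a hM hub (k + 1)
    have hprod : L (a ^ (2 * k)) * L (a ^ (2 * (k + 1))) ≤ M ^ k * M ^ (k + 1) :=
      mul_le_mul b1 b2 (evenNonneg L hpsd a (k + 1)) (by positivity)
    have hM2 : (Real.sqrt M ^ (2 * k + 1)) ^ 2 = M ^ k * M ^ (k + 1) := by
      rw [← pow_mul, mul_comm, pow_mul, hsq, ← pow_add]
      congr 1; ring
    nlinarith [abs_nonneg (L (a ^ (2 * k + 1))), sq_abs (L (a ^ (2 * k + 1))),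
      pow_nonneg hs (2 * k + 1)]

/-- moment bound implies ratio bound. -/
lemma ratioBound (L : A →ₗ[ℝ] ℝ) (hpsd : ∀ x : A, 0 ≤ L (x ^ 2))
    (a : A) {c : ℝ} (hc : 0 ≤ c) (hb : ∀ n : ℕ, |L (a ^ n)| ≤ c ^ n) :
    ∀ r ∈ ratioSet L a, r ≤ c ^ 2 := by
  rintro r ⟨n, hz, rfl⟩
  set s : ℕ → ℝ := fun k => L (a ^ (2 * k)) with hs
  have hsn : ∀ k, 0 ≤ s k := fun k => evenNonneg L hpsd a k
  have hcs : ∀ k, (s (k + 1))^2 ≤ s k * s (k + 2) := fun k => csEven L hpsd a k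
  have hbnd : ∀ k, s k ≤ (c ^ 2) ^ k := by
    intro k
    calc s k ≤ |s k| := le_abs_self _
      _ ≤ c ^ (2 * k) := hb (2 * k)
      _ = (c ^ 2) ^ k := by rw [← pow_mul]
  have hpos : 0 < s n := (hsn n).lt_of_ne (Ne.symm hz)
  by_contra hlt
  push_neg at hlt
  set r : ℝ := L (a ^ (2 * n + 2)) / L (a ^ (2 * n)) with hr
  have hrs : r * s n = s (n + 1) := by
    have : (2 * (n + 1)) = 2 * n + 2 := by ring
    rw [hs]; simp only [this]; rw [hr]; field_simp
  have hr0 : 0 < r := lt_of_le_of_lt (sq_nonneg c) hlt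
  have chain : ∀ m, 0 < s (n + m) ∧ r * s (n + m) ≤ s (n + m + 1) := by
    intro m
    induction m with
    | zero => exact ⟨hpos, le_of_eq hrs⟩
    | succ m ih =>
      obtain ⟨h0, h1⟩ := ih
      have pos1 : 0 < s (n + m + 1) := lt_of_lt_of_le (mul_pos hr0 h0) h1
      refine ⟨pos1, ?_⟩
      have hcs' := hcs (n + m)
      have key : s (n + m) * (r * s (n + m + 1)) ≤ s (n + m) * s (n + m + 2) := by
        nlinarith [mul_le_mul_of_nonneg_right h1 (le_of_lt pos1)]
      have := le_of_mul_le_mul_left key h0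
      exact this
  have geo : ∀ m, r ^ m * s n ≤ s (n + m) := by
    intro m
    induction m with
    | zero => simp
    | succ m ih =>
      calc r ^ (m + 1) * s n = r * (r ^ m * s n) := by ring
        _ ≤ r * s (n + m) := by exact mul_le_mul_of_nonneg_left ih (le_of_lt hr0)
        _ ≤ s (n + m + 1) := (chain m).2
  rcases eq_or_lt_of_le hc with hc0 | hc0
  · have h1 := geo 1
    have h2 := hbnd (n + 1)
    rw [← hc0] at h2
    simp at h2
    nlinarith [hpos, hr0]
  · have hc2 : 0 < c ^ 2 := by positivity
    have ht : 1 < r / c ^ 2 := (one_lt_div hc2).2 hlt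
    obtain ⟨m, hm⟩ := pow_unbounded_of_one_lt ((c ^ 2) ^ n / s n) ht
    have hle : (r / c ^ 2) ^ m ≤ (c ^ 2) ^ n / s n := by
      rw [div_pow, div_le_div_iff₀ (by positivity) hpos]
      calc r ^ m * s n ≤ s (n + m) := geo m
        _ ≤ (c ^ 2) ^ (n + m) := hbnd (n + m)
        _ = (c ^ 2) ^ n * (c ^ 2) ^ m := pow_add _ _ _
    exact absurd hm (not_lt.2 hle)

theorem stmt0 (L : A →ₗ[ℝ] ℝ) (hpsd : ∀ x : A, 0 ≤ L (x ^ 2)) (h1 : L 1 = 1) (a : A) :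
    (BddAbove (ratioSet L a) ↔ ∃ c : ℝ, 0 ≤ c ∧ ∀ n : ℕ, |L (a ^ n)| ≤ c ^ n) ∧
    (BddAbove (ratioSet L a) →
      vL L a = sInf {c : ℝ | 0 ≤ c ∧ ∀ n : ℕ, |L (a ^ n)| ≤ c ^ n}) := by
  have hmem0 : L (a ^ (2 * 0)) ≠ 0 := by simp [h1]
  have r0mem : L (a ^ (2 * 0 + 2)) / L (a ^ (2 * 0)) ∈ ratioSet L a := ⟨0, hmem0, rfl⟩
  have hne : (ratioSet L a).Nonempty := ⟨_, r0mem⟩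
  have r0nonneg : 0 ≤ L (a ^ (2 * 0 + 2)) / L (a ^ (2 * 0)) := by
    have := hpsd a
    norm_num [h1]
    simpa using this
  have fwd : BddAbove (ratioSet L a) → ∃ c : ℝ, 0 ≤ c ∧ ∀ n : ℕ, |L (a ^ n)| ≤ c ^ n := by
    rintro ⟨M, hM⟩
    have hub : ∀ r ∈ ratioSet L a, r ≤ M := fun r hr => hM hr
    have hM0 : 0 ≤ M := le_trans r0nonneg (hub _ r0mem)
    exact ⟨Real.sqrt M, Real.sqrt_nonneg M, absMomentBound L hpsd h1 a hM0 hub⟩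
  have bwd : (∃ c : ℝ, 0 ≤ c ∧ ∀ n : ℕ, |L (a ^ n)| ≤ c ^ n) → BddAbove (ratioSet L a) := by
    rintro ⟨c, hc, hb⟩
    exact ⟨c ^ 2, fun r hr => ratioBound L hpsd a hc hb r hr⟩
  refine ⟨⟨fwd, bwd⟩, ?_⟩
  intro hB
  have hRub : ∀ r ∈ ratioSet L a, r ≤ sSup (ratioSet L a) := fun r hr => le_csSup hB hr
  have hR0 : 0 ≤ sSup (ratioSet L a) := le_trans r0nonneg (hRub _ r0mem)
  rw [vL]
  apply le_antisymm
  · obtain ⟨c, hc, hb⟩ := fwd hB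
    refine le_csInf ⟨c, hc, hb⟩ ?_
    rintro b ⟨hb0, hbn⟩
    have hRle : sSup (ratioSet L a) ≤ b ^ 2 := csSup_le hne (ratioBound L hpsd a hb0 hbn)
    calc Real.sqrt (sSup (ratioSet L a)) ≤ Real.sqrt (b ^ 2) := Real.sqrt_le_sqrt hRle
      _ = b := Real.sqrt_sq hb0
  · exact csInf_le ⟨0, fun c hc => hc.1⟩
      ⟨Real.sqrt_nonneg _, absMomentBound L hpsd h1 a hR0 hRub⟩
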